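/- The map G : ℝ^(3×3)_sym → ℝ^(3×3)_sym defined on symmetric 3×3 matrices by G(T) = |dev(T)|^{p-1} dev(T), where dev(T) = T - (tr T / 3)·I and |·| is the Frobenius norm, is monotone: (G(S) - G(T)) · (S - T) ≥ 0 for all symmetric matrices S, T, where · denotes the Frobenius inner product. Here p > 1 is a fixed real number and we use the convention |0|^{p-1}·0 = 0. -/
import Mathlib


open Matrix BigOperators

noncomputable def frobInner (A B : Matrix (Fin 3) (Fin 3) ℝ) : ℝ :=
  ∑ i : Fin 3, ∑ j : Fin 3, A i j * B i j

noncomputable def frobNorm (A : Matrix (Fin 3) (Fin 3) ℝ) : ℝ :=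
  Real.sqrt (frobInner A A)

noncomputable def devM (T : Matrix (Fin 3) (Fin 3) ℝ) : Matrix (Fin 3) (Fin 3) ℝ :=
  T - (Matrix.trace T / 3) • (1 : Matrix (Fin 3) (Fin 3) ℝ)

noncomputable def NortonG (p : ℝ) (T : Matrix (Fin 3) (Fin 3) ℝ) : Matrix (Fin 3) (Fin 3) ℝ :=
  (frobNorm (devM T)) ^ (p - 1) • devM T

lemma frobInner_comm (A B : Matrix (Fin 3) (Fin 3) ℝ) : frobInner A B = frobInner B A := by
  simp [frobInner, mul_comm]

lemma frobInner_self_nonneg (A : Matrix (Fin 3) (Fin 3) ℝ) : 0 ≤ frobInner A A :=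
  Finset.sum_nonneg fun i _ => Finset.sum_nonneg fun j _ => mul_self_nonneg _

lemma frobInner_self (A : Matrix (Fin 3) (Fin 3) ℝ) :
    frobInner A A = frobNorm A * frobNorm A :=
  (Real.mul_self_sqrt (frobInner_self_nonneg A)).symm

lemma frobInner_sub_left (A B C : Matrix (Fin 3) (Fin 3) ℝ) :
    frobInner (A - B) C = frobInner A C - frobInner B C := by
  simp [frobInner, Matrix.sub_apply, sub_mul, Finset.sum_sub_distrib]

lemma frobInner_sub_right (A B C : Matrix (Fin 3) (Fin 3) ℝ) :
    frobInner A (B - C) = frobInner A B - frobInner A C := by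
  simp [frobInner, Matrix.sub_apply, mul_sub, Finset.sum_sub_distrib]

lemma frobInner_add_right (A B C : Matrix (Fin 3) (Fin 3) ℝ) :
    frobInner A (B + C) = frobInner A B + frobInner A C := by
  simp [frobInner, Matrix.add_apply, mul_add, Finset.sum_add_distrib]

lemma frobInner_smul_left (c : ℝ) (A B : Matrix (Fin 3) (Fin 3) ℝ) :
    frobInner (c • A) B = c * frobInner A B := by
  simp [frobInner, Matrix.smul_apply, Finset.mul_sum, mul_assoc, smul_eq_mul]

lemma frobInner_smul_one (A : Matrix (Fin 3) (Fin 3) ℝ) (c : ℝ) :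
    frobInner A (c • (1 : Matrix (Fin 3) (Fin 3) ℝ)) = c * Matrix.trace A := by
  simp [frobInner, Matrix.smul_apply, Matrix.one_apply, Matrix.trace, Matrix.diag,
    mul_ite, Finset.mul_sum, mul_comm]

lemma frobInner_cauchy (A B : Matrix (Fin 3) (Fin 3) ℝ) :
    frobInner A B ≤ frobNorm A * frobNorm B := by
  have h : ∀ C D : Matrix (Fin 3) (Fin 3) ℝ,
      frobInner C D = ∑ x : Fin 3 × Fin 3, C x.1 x.2 * D x.1 x.2 := by
    intro C D
    exact (Fintype.sum_prod_type (f := fun x : Fin 3 × Fin 3 => C x.1 x.2 * D x.1 x.2)).symm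
  have hcs := Real.sum_mul_le_sqrt_mul_sqrt (Finset.univ : Finset (Fin 3 × Fin 3))
    (fun x => A x.1 x.2) (fun x => B x.1 x.2)
  rw [h A B, frobNorm, frobNorm, h A A, h B B]
  simpa [sq] using hcs

lemma trace_devM (T : Matrix (Fin 3) (Fin 3) ℝ) : Matrix.trace (devM T) = 0 := by
  simp [devM, Matrix.trace_sub, Matrix.trace_smul, Matrix.trace_one, smul_eq_mul]

theorem nortonG_monotone (p : ℝ) (hp : 1 < p)
    (S T : Matrix (Fin 3) (Fin 3) ℝ) (hS : Sᵀ = S) (hT : Tᵀ = T) :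
    0 ≤ frobInner (NortonG p S - NortonG p T) (S - T) := by
  have hq : 0 < p - 1 := by linarith
  set a := devM S with ha
  set b := devM T with hb
  set na := frobNorm a with hna'
  set nb := frobNorm b with hnb'
  have hna : 0 ≤ na := Real.sqrt_nonneg _
  have hnb : 0 ≤ nb := Real.sqrt_nonneg _
  set c : ℝ := na ^ (p - 1) with hc
  set d : ℝ := nb ^ (p - 1) with hd
  have hcpos : 0 ≤ c := Real.rpow_nonneg hna _
  have hdpos : 0 ≤ d := Real.rpow_nonneg hnb _
  -- decompose S - T
  have key : S - T = (a - b) +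
      ((Matrix.trace S - Matrix.trace T) / 3) • (1 : Matrix (Fin 3) (Fin 3) ℝ) := by
    rw [ha, hb]
    simp only [devM, sub_smul]
    module
  have hG : NortonG p S - NortonG p T = c • a - d • b := rfl
  rw [hG, key, frobInner_add_right, frobInner_smul_one]
  have htr : Matrix.trace (c • a - d • b) = 0 := by
    rw [Matrix.trace_sub, Matrix.trace_smul, Matrix.trace_smul, ha, hb,
      trace_devM, trace_devM]
    simp
  rw [htr, mul_zero, add_zero]
  -- expand the inner product
  rw [frobInner_sub_left, frobInner_sub_right, frobInner_sub_right,
    frobInner_smul_left, frobInner_smul_left, frobInner_smul_left, frobInner_smul_left,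
    frobInner_self, frobInner_self, frobInner_comm b a]
  have hab : frobInner a b ≤ na * nb := frobInner_cauchy a b
  simp only [← hna', ← hnb']
  have hsum : (c + d) * frobInner a b ≤ (c + d) * (na * nb) :=
    mul_le_mul_of_nonneg_left hab (add_nonneg hcpos hdpos)
  rcases le_total na nb with h | h
  · have hcd : c ≤ d := Real.rpow_le_rpow hna h (le_of_lt hq)
    have h1 : c * na ≤ d * nb := mul_le_mul hcd h hna hdpos
    nlinarith [mul_nonneg (sub_nonneg.2 h1) (sub_nonneg.2 h)]
  · have hcd : d ≤ c := Real.rpow_le_rpow hnb h (le_of_lt hq)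
    have h1 : d * nb ≤ c * na := mul_le_mul hcd h hnb hcpos
    nlinarith [mul_nonneg (sub_nonneg.2 h1) (sub_nonneg.2 h)]
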